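/- If a random unit vector h is chosen uniformly from the unit sphere in ℝ^d and x, y ∈ ℝ^d are two distinct points, then the probability that the hyperplane through the origin with normal h separates x and y (i.e., sign(⟨x,h⟩) ≠ sign(⟨y,h⟩)) equals θ/π, where θ is the angle between x and y. -/

import Mathlib

open MeasureTheory Metric Set
open scoped Pointwise ENNReal Real

namespace RandomHyperplane

lemma sign_mul_pos {c : ℝ} (hc : 0 < c) (t : ℝ) : Real.sign (c * t) = Real.sign t := by
  rcases lt_trichotomy t 0 with ht | rfl | ht
  · rw [Real.sign_of_neg ht, Real.sign_of_neg (mul_neg_of_pos_of_neg hc ht)]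
  · rw [mul_zero]
  · rw [Real.sign_of_pos ht, Real.sign_of_pos (mul_pos hc ht)]

lemma sign_ne_iff {a b : ℝ} (ha : a ≠ 0) (hb : b ≠ 0) :
    Real.sign a ≠ Real.sign b ↔ a * b < 0 := by
  constructor
  · intro h
    rcases ha.lt_or_gt with ha' | ha' <;> rcases hb.lt_or_gt with hb' | hb'
    · exact absurd (by rw [Real.sign_of_neg ha', Real.sign_of_neg hb']) h
    · exact mul_neg_of_neg_of_pos ha' hb'
    · exact mul_neg_of_pos_of_neg ha' hb'
    · exact absurd (by rw [Real.sign_of_pos ha', Real.sign_of_pos hb']) h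
  · intro h heq
    rcases ha.lt_or_gt with ha' | ha' <;> rcases hb.lt_or_gt with hb' | hb'
    · nlinarith
    · rw [Real.sign_of_neg ha', Real.sign_of_pos hb'] at heq; norm_num at heq
    · rw [Real.sign_of_pos ha', Real.sign_of_neg hb'] at heq; norm_num at heq
    · nlinarith

lemma mul_lt_zero_iff_of_pos {c q : ℝ} (hc : 0 < c) : c * q < 0 ↔ q < 0 :=
  ⟨fun h => by nlinarith, fun h => mul_neg_of_pos_of_neg hc h⟩

/-- The angular measure of the double wedge. -/
lemma volume_angle_set {θ : ℝ} (hθ1 : 0 < θ) (hθ2 : θ < π) :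
    volume ({φ : ℝ | Real.cos φ * Real.cos (φ - θ) < 0} ∩ Ioo (-π) π)
      = ENNReal.ofReal (2 * θ) := by
  have hπ := Real.pi_pos
  have cos_nonpos_neg : ∀ {ψ : ℝ}, π / 2 ≤ -ψ → -ψ ≤ π + π / 2 → Real.cos ψ ≤ 0 := by
    intro ψ h1 h2
    have := Real.cos_nonpos_of_pi_div_two_le_of_le h1 h2
    rwa [Real.cos_neg] at this
  have cos_neg_neg : ∀ {ψ : ℝ}, π / 2 < -ψ → -ψ < π + π / 2 → Real.cos ψ < 0 := by
    intro ψ h1 h2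
    have := Real.cos_neg_of_pi_div_two_lt_of_lt h1 h2
    rwa [Real.cos_neg] at this
  rcases le_or_gt θ (π / 2) with hc | hc
  · have hset : {φ : ℝ | Real.cos φ * Real.cos (φ - θ) < 0} ∩ Ioo (-π) π
        = Ioo (-(π/2)) (θ - π/2) ∪ Ioo (π/2) (θ + π/2) := by
      ext φ
      simp only [mem_inter_iff, mem_setOf_eq, mem_Ioo, mem_union]
      constructor
      · rintro ⟨hprod, hl, hr⟩
        rcases le_or_gt φ (-(π/2)) with h1 | h1
        · exfalso
          have c1 : Real.cos φ ≤ 0 := cos_nonpos_neg (by linarith) (by linarith)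
          have c2 : Real.cos (φ - θ) ≤ 0 := cos_nonpos_neg (by linarith) (by linarith)
          nlinarith
        · rcases lt_or_ge φ (θ - π/2) with h2 | h2
          · exact Or.inl ⟨h1, h2⟩
          · rcases le_or_gt φ (π/2) with h3 | h3
            · exfalso
              have c1 : 0 ≤ Real.cos φ := Real.cos_nonneg_of_mem_Icc ⟨by linarith, h3⟩
              have c2 : 0 ≤ Real.cos (φ - θ) :=
                Real.cos_nonneg_of_mem_Icc ⟨by linarith, by linarith⟩
              nlinarith
            · rcases lt_or_ge φ (θ + π/2) with h4 | h4
              · exact Or.inr ⟨h3, h4⟩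
              · exfalso
                have c1 : Real.cos φ ≤ 0 :=
                  Real.cos_nonpos_of_pi_div_two_le_of_le (by linarith) (by linarith)
                have c2 : Real.cos (φ - θ) ≤ 0 :=
                  Real.cos_nonpos_of_pi_div_two_le_of_le (by linarith) (by linarith)
                nlinarith
      · rintro (⟨h1, h2⟩ | ⟨h1, h2⟩)
        · have c1 : 0 < Real.cos φ := Real.cos_pos_of_mem_Ioo ⟨h1, by linarith⟩
          have c2 : Real.cos (φ - θ) < 0 := cos_neg_neg (by linarith) (by linarith)
          exact ⟨mul_neg_of_pos_of_neg c1 c2, by linarith, by linarith⟩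
        · have c1 : Real.cos φ < 0 :=
            Real.cos_neg_of_pi_div_two_lt_of_lt h1 (by linarith)
          have c2 : 0 < Real.cos (φ - θ) :=
            Real.cos_pos_of_mem_Ioo ⟨by linarith, by linarith⟩
          exact ⟨mul_neg_of_neg_of_pos c1 c2, by linarith, by linarith⟩
    rw [hset, measure_union ?disj measurableSet_Ioo, Real.volume_Ioo, Real.volume_Ioo,
      ← ENNReal.ofReal_add (by linarith) (by linarith)]
    · congr 1; ring
    case disj =>
      rw [Set.disjoint_left]
      rintro a ⟨-, ha2⟩ ⟨ha3, -⟩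
      linarith
  · have hset : {φ : ℝ | Real.cos φ * Real.cos (φ - θ) < 0} ∩ Ioo (-π) π
        = (Ioo (-π) (θ - 3*π/2) ∪ Ioo (-(π/2)) (θ - π/2)) ∪ Ioo (π/2) π := by
      ext φ
      simp only [mem_inter_iff, mem_setOf_eq, mem_Ioo, mem_union]
      constructor
      · rintro ⟨hprod, hl, hr⟩
        rcases lt_or_ge φ (θ - 3*π/2) with h1 | h1
        · exact Or.inl (Or.inl ⟨hl, h1⟩)
        · rcases le_or_gt φ (-(π/2)) with h2 | h2
          · exfalso
            have c1 : Real.cos φ ≤ 0 := cos_nonpos_neg (by linarith) (by linarith)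
            have c2 : Real.cos (φ - θ) ≤ 0 := cos_nonpos_neg (by linarith) (by linarith)
            nlinarith
          · rcases lt_or_ge φ (θ - π/2) with h3 | h3
            · exact Or.inl (Or.inr ⟨h2, h3⟩)
            · rcases le_or_gt φ (π/2) with h4 | h4
              · exfalso
                have c1 : 0 ≤ Real.cos φ := Real.cos_nonneg_of_mem_Icc ⟨by linarith, h4⟩
                have c2 : 0 ≤ Real.cos (φ - θ) :=
                  Real.cos_nonneg_of_mem_Icc ⟨by linarith, by linarith⟩
                nlinarith
              · exact Or.inr ⟨h4, hr⟩
      · rintro ((⟨h1, h2⟩ | ⟨h1, h2⟩) | ⟨h1, h2⟩)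
        · have c1 : Real.cos φ < 0 := cos_neg_neg (by linarith) (by linarith)
          have e1 : Real.cos (φ - θ) = Real.cos (2*π - (θ - φ)) := by
            rw [Real.cos_two_pi_sub, show θ - φ = -(φ - θ) by ring, Real.cos_neg]
          have c2 : 0 < Real.cos (φ - θ) := by
            rw [e1]
            exact Real.cos_pos_of_mem_Ioo ⟨by linarith, by linarith⟩
          exact ⟨mul_neg_of_neg_of_pos c1 c2, h1, by linarith⟩
        · have c1 : 0 < Real.cos φ := Real.cos_pos_of_mem_Ioo ⟨h1, by linarith⟩
          have c2 : Real.cos (φ - θ) < 0 := cos_neg_neg (by linarith) (by linarith)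
          exact ⟨mul_neg_of_pos_of_neg c1 c2, by linarith, by linarith⟩
        · have c1 : Real.cos φ < 0 :=
            Real.cos_neg_of_pi_div_two_lt_of_lt h1 (by linarith)
          have c2 : 0 < Real.cos (φ - θ) :=
            Real.cos_pos_of_mem_Ioo ⟨by linarith, by linarith⟩
          exact ⟨mul_neg_of_neg_of_pos c1 c2, by linarith, h2⟩
    have d12 : Disjoint (Ioo (-π) (θ - 3*π/2)) (Ioo (-(π/2)) (θ - π/2)) := by
      rw [Set.disjoint_left]
      rintro a ⟨-, ha2⟩ ⟨ha3, -⟩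
      linarith
    have d3 : Disjoint (Ioo (-π) (θ - 3*π/2) ∪ Ioo (-(π/2)) (θ - π/2)) (Ioo (π/2) π) := by
      rw [Set.disjoint_left]
      rintro a (⟨-, ha2⟩ | ⟨-, ha2⟩) ⟨ha3, -⟩ <;> linarith
    rw [hset, measure_union d3 measurableSet_Ioo, measure_union d12 measurableSet_Ioo,
      Real.volume_Ioo, Real.volume_Ioo, Real.volume_Ioo,
      ← ENNReal.ofReal_add (by linarith) (by linarith),
      ← ENNReal.ofReal_add (by linarith) (by linarith)]
    congr 1; ring

lemma lintegral_comp_polarCoord_symm (f : ℝ × ℝ → ℝ≥0∞) :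
    ∫⁻ p, f p = ∫⁻ p in polarCoord.target, ENNReal.ofReal p.1 * f (polarCoord.symm p) := by
  set B : ℝ × ℝ → ℝ × ℝ →L[ℝ] ℝ × ℝ := fun p =>
    LinearMap.toContinuousLinearMap (Matrix.toLin (Module.Basis.finTwoProd ℝ) (Module.Basis.finTwoProd ℝ)
      !![Real.cos p.2, -p.1 * Real.sin p.2; Real.sin p.2, p.1 * Real.cos p.2]) with hB
  have A : ∀ p ∈ polarCoord.target, HasFDerivWithinAt (⇑polarCoord.symm) (B p)
      polarCoord.target p := fun p _ => (hasFDerivAt_polarCoord_symm p).hasFDerivWithinAt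
  have B_det : ∀ p, (B p).det = p.1 := by
    intro p
    conv_rhs => rw [← one_mul p.1, ← Real.cos_sq_add_sin_sq p.2]
    simp only [B, neg_mul, LinearMap.det_toContinuousLinearMap, LinearMap.det_toLin,
      Matrix.det_fin_two_of, sub_neg_eq_add]
    ring
  have hinj : Set.InjOn (⇑polarCoord.symm) polarCoord.target := polarCoord.symm.injOn
  calc ∫⁻ p, f p = ∫⁻ p in polarCoord.source, f p := by
        rw [← setLIntegral_univ]
        exact (setLIntegral_congr polarCoord_source_ae_eq_univ).symm
    _ = ∫⁻ p in ⇑polarCoord.symm '' polarCoord.target, f p := by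
        rw [polarCoord.symm_image_target_eq_source]
    _ = ∫⁻ p in polarCoord.target, ENNReal.ofReal |(B p).det| * f (polarCoord.symm p) := by
        exact lintegral_image_eq_lintegral_abs_det_fderiv_mul volume
          polarCoord.open_target.measurableSet A hinj f
    _ = ∫⁻ p in polarCoord.target, ENNReal.ofReal p.1 * f (polarCoord.symm p) := by
        refine setLIntegral_congr_fun polarCoord.open_target.measurableSet
          (fun p hp => ?_)
        rw [B_det, abs_of_pos hp.1]

/-- volume of the slice ball in `Fin m → ℝ`. -/
noncomputable def Gm (m : ℕ) (t : ℝ) : ℝ≥0∞ := volume {z : Fin m → ℝ | ∑ i, z i ^ 2 < t}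

lemma Gm_measurable (m : ℕ) : Measurable (Gm m) := by
  apply Monotone.measurable
  intro s t hst
  exact measure_mono fun z hz => lt_of_lt_of_le hz hst

lemma polarCoord_symm_mem_target_fst_pos :
    ∀ p ∈ polarCoord.target, polarCoord.symm p = (p.1 * Real.cos p.2, p.1 * Real.sin p.2) :=
  fun p _ => rfl

lemma Fm_measurable (m : ℕ) :
    Measurable fun r : ℝ => ENNReal.ofReal r * Gm m (1 - r ^ 2) :=
  measurable_id.ennreal_ofReal.mul
    ((Gm_measurable m).comp ((continuous_const.sub (continuous_pow 2)).measurable))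

lemma lintegral_disk (m : ℕ) :
    ∫⁻ ab : ℝ × ℝ, Gm m (1 - ab.1 ^ 2 - ab.2 ^ 2)
      = (∫⁻ r in Ioi (0:ℝ), ENNReal.ofReal r * Gm m (1 - r ^ 2)) * ENNReal.ofReal (2 * π) := by
  rw [lintegral_comp_polarCoord_symm]
  have h1 : ∫⁻ p in polarCoord.target,
      ENNReal.ofReal p.1 * Gm m (1 - (polarCoord.symm p).1 ^ 2 - (polarCoord.symm p).2 ^ 2)
      = ∫⁻ p in polarCoord.target,
        (fun r => ENNReal.ofReal r * Gm m (1 - r ^ 2)) p.1 * (fun _ : ℝ => (1:ℝ≥0∞)) p.2 := by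
    refine setLIntegral_congr_fun polarCoord.open_target.measurableSet
      (fun p hp => ?_)
    have harg : 1 - (polarCoord.symm p).1 ^ 2 - (polarCoord.symm p).2 ^ 2 = 1 - p.1 ^ 2 := by
      show 1 - (p.1 * Real.cos p.2) ^ 2 - (p.1 * Real.sin p.2) ^ 2 = 1 - p.1 ^ 2
      linear_combination (-(p.1 ^ 2)) * Real.sin_sq_add_cos_sq p.2
    rw [harg, mul_one]
  rw [h1, polarCoord_target, Measure.volume_eq_prod, ← Measure.prod_restrict,
    lintegral_prod_mul (Fm_measurable m).aemeasurable aemeasurable_const]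
  congr 1
  rw [setLIntegral_one, Real.volume_Ioo]
  congr 1; ring

lemma lintegral_wedge (m : ℕ) {θ : ℝ} (hθ1 : 0 < θ) (hθ2 : θ < π) :
    ∫⁻ ab in {ab : ℝ × ℝ | ab.1 * (Real.cos θ * ab.1 + Real.sin θ * ab.2) < 0},
        Gm m (1 - ab.1 ^ 2 - ab.2 ^ 2)
      = (∫⁻ r in Ioi (0:ℝ), ENNReal.ofReal r * Gm m (1 - r ^ 2)) * ENNReal.ofReal (2 * θ) := by
  set W : Set (ℝ × ℝ) := {ab : ℝ × ℝ | ab.1 * (Real.cos θ * ab.1 + Real.sin θ * ab.2) < 0}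
    with hWdef
  set A : Set ℝ := {φ : ℝ | Real.cos φ * Real.cos (φ - θ) < 0} with hAdef
  have hW : MeasurableSet W :=
    measurableSet_lt (by fun_prop) measurable_const
  have hA : MeasurableSet A :=
    measurableSet_lt (by fun_prop) measurable_const
  rw [← lintegral_indicator hW]
  rw [lintegral_comp_polarCoord_symm]
  have h1 : ∫⁻ p in polarCoord.target,
      ENNReal.ofReal p.1 * W.indicator (fun ab => Gm m (1 - ab.1 ^ 2 - ab.2 ^ 2))
        (polarCoord.symm p)
      = ∫⁻ p in polarCoord.target,
        (fun r => ENNReal.ofReal r * Gm m (1 - r ^ 2)) p.1 * A.indicator 1 p.2 := by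
    refine setLIntegral_congr_fun polarCoord.open_target.measurableSet
      (fun p hp => ?_)
    have hp1 : 0 < p.1 := hp.1
    have harg : 1 - (polarCoord.symm p).1 ^ 2 - (polarCoord.symm p).2 ^ 2 = 1 - p.1 ^ 2 := by
      show 1 - (p.1 * Real.cos p.2) ^ 2 - (p.1 * Real.sin p.2) ^ 2 = 1 - p.1 ^ 2
      linear_combination (-(p.1 ^ 2)) * Real.sin_sq_add_cos_sq p.2
    have hmem : polarCoord.symm p ∈ W ↔ p.2 ∈ A := by
      show (p.1 * Real.cos p.2) * (Real.cos θ * (p.1 * Real.cos p.2)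
          + Real.sin θ * (p.1 * Real.sin p.2)) < 0 ↔ _
      have key : (p.1 * Real.cos p.2) * (Real.cos θ * (p.1 * Real.cos p.2)
          + Real.sin θ * (p.1 * Real.sin p.2))
          = p.1 ^ 2 * (Real.cos p.2 * Real.cos (p.2 - θ)) := by
        rw [Real.cos_sub]; ring
      rw [key, mul_lt_zero_iff_of_pos (pow_pos hp1 2)]
      rfl
    by_cases hmemA : p.2 ∈ A
    · rw [Set.indicator_of_mem (hmem.2 hmemA), Set.indicator_of_mem hmemA, harg,
        Pi.one_apply, mul_one]
    · rw [Set.indicator_of_notMem (fun h => hmemA (hmem.1 h)),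
        Set.indicator_of_notMem hmemA, mul_zero, mul_zero]
  rw [h1, polarCoord_target, Measure.volume_eq_prod, ← Measure.prod_restrict,
    lintegral_prod_mul (Fm_measurable m).aemeasurable
      (measurable_one.indicator hA).aemeasurable]
  congr 1
  rw [lintegral_indicator_one hA, Measure.restrict_apply hA]
  exact volume_angle_set hθ1 hθ2

lemma exists_onb {m : ℕ} (u w : EuclideanSpace ℝ (Fin (m+2))) (hu : ‖u‖ = 1) (hw : ‖w‖ = 1)
    (huw : (inner ℝ u w : ℝ) = 0) :
    ∃ b : OrthonormalBasis (Fin (m+2)) ℝ (EuclideanSpace ℝ (Fin (m+2))), b 0 = u ∧ b 1 = w := by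
  classical
  set v : Fin (m+2) → EuclideanSpace ℝ (Fin (m+2)) := fun i => if i = 0 then u else w with hv
  have h10 : (1 : Fin (m+2)) ≠ 0 := by simp [Fin.ext_iff]
  have hcard : Module.finrank ℝ (EuclideanSpace ℝ (Fin (m+2))) = Fintype.card (Fin (m+2)) := by
    simp [finrank_euclideanSpace_fin]
  have hon : Orthonormal ℝ (({0, 1} : Set (Fin (m+2))).restrict v) := by
    constructor
    · rintro ⟨i, hi⟩
      rcases hi with rfl | hi
      · simpa [v, Set.restrict] using hu
      · rw [Set.mem_singleton_iff] at hi; subst hi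
        simpa [v, h10, Set.restrict] using hw
    · rintro ⟨i, hi⟩ ⟨j, hj⟩ hij
      have hij' : i ≠ j := fun h => hij (Subtype.ext h)
      have hwu : (inner ℝ w u : ℝ) = 0 := by rw [real_inner_comm]; exact huw
      rcases hi with rfl | hi
      · rcases hj with rfl | hj
        · exact absurd rfl hij'
        · rw [Set.mem_singleton_iff] at hj; subst hj
          simpa [v, h10, Set.restrict] using huw
      · rw [Set.mem_singleton_iff] at hi; subst hi
        rcases hj with rfl | hj
        · simpa [v, h10, Set.restrict] using hwu
        · rw [Set.mem_singleton_iff] at hj; subst hj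
          exact absurd rfl hij'
  obtain ⟨b, hb⟩ := hon.exists_orthonormalBasis_extension_of_card_eq hcard
  refine ⟨b, ?_, ?_⟩
  · rw [hb 0 (by simp)]; simp [v]
  · rw [hb 1 (by simp)]; simp [v, h10]

lemma transfer {m : ℕ} (u w : EuclideanSpace ℝ (Fin (m+2))) (hu : ‖u‖ = 1) (hw : ‖w‖ = 1)
    (huw : (inner ℝ u w : ℝ) = 0) (W : Set (ℝ × ℝ)) (hW : MeasurableSet W) :
    volume {v : EuclideanSpace ℝ (Fin (m+2)) |
        ‖v‖ < 1 ∧ ((inner ℝ u v : ℝ), (inner ℝ w v : ℝ)) ∈ W}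
      = ∫⁻ ab in W, Gm m (1 - ab.1 ^ 2 - ab.2 ^ 2) := by
  classical
  obtain ⟨b, hb0, hb1⟩ := exists_onb u w hu hw huw
  -- sets
  set T5 : Set ((ℝ × ℝ) × (Fin m → ℝ)) :=
    {q | q.1.1 ^ 2 + (q.1.2 ^ 2 + ∑ j, q.2 j ^ 2) < 1 ∧ q.1 ∈ W} with hT5def
  set T4 : Set (ℝ × (ℝ × (Fin m → ℝ))) :=
    {q | q.1 ^ 2 + (q.2.1 ^ 2 + ∑ j, q.2.2 j ^ 2) < 1 ∧ (q.1, q.2.1) ∈ W} with hT4def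
  set T3 : Set (ℝ × (Fin (m+1) → ℝ)) :=
    {q | q.1 ^ 2 + ∑ j, q.2 j ^ 2 < 1 ∧ (q.1, q.2 0) ∈ W} with hT3def
  set T2 : Set (Fin (m+2) → ℝ) :=
    {f | ∑ i, f i ^ 2 < 1 ∧ (f 0, f 1) ∈ W} with hT2def
  -- measurability
  have hsum2 : Measurable fun f : Fin (m+2) → ℝ => ∑ i, f i ^ 2 := by fun_prop
  have hT2 : MeasurableSet T2 := by
    refine (measurableSet_lt hsum2 measurable_const).inter ?_
    exact ((measurable_pi_apply 0).prodMk (measurable_pi_apply 1)) hW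
  have hs3 : Measurable fun q : ℝ × (Fin (m+1) → ℝ) => q.1 ^ 2 + ∑ j, q.2 j ^ 2 := by fun_prop
  have hs4 : Measurable fun q : ℝ × (ℝ × (Fin m → ℝ)) =>
      q.1 ^ 2 + (q.2.1 ^ 2 + ∑ j, q.2.2 j ^ 2) := by fun_prop
  have hs5 : Measurable fun q : (ℝ × ℝ) × (Fin m → ℝ) =>
      q.1.1 ^ 2 + (q.1.2 ^ 2 + ∑ j, q.2 j ^ 2) := by fun_prop
  have hT3 : MeasurableSet T3 :=
    (measurableSet_lt hs3 measurable_const).inter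
      ((measurable_fst.prodMk ((measurable_pi_apply 0).comp measurable_snd)) hW)
  have hT4 : MeasurableSet T4 :=
    (measurableSet_lt hs4 measurable_const).inter
      ((measurable_fst.prodMk (measurable_fst.comp measurable_snd)) hW)
  have hT5 : MeasurableSet T5 :=
    (measurableSet_lt hs5 measurable_const).inter (measurable_fst hW)
  -- step 0 -> 2 : orthonormal basis plus EuclideanSpace.measurableEquiv
  have hnorm : ∀ q : EuclideanSpace ℝ (Fin (m+2)), (∑ i, q i ^ 2 < 1 ↔ ‖q‖ < 1) := by
    intro q
    rw [EuclideanSpace.norm_eq]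
    simp only [Real.norm_eq_abs, sq_abs]
    rw [Real.sqrt_lt' one_pos, one_pow]
  have e0 : {v : EuclideanSpace ℝ (Fin (m+2)) |
        ‖v‖ < 1 ∧ ((inner ℝ u v : ℝ), (inner ℝ w v : ℝ)) ∈ W}
      = ⇑b.repr ⁻¹' (⇑((MeasurableEquiv.toLp 2 (Fin (m+2) → ℝ)).symm) ⁻¹' T2) := by
    ext v
    simp only [mem_preimage, hT2def, mem_setOf_eq]
    have happ : ∀ i, ((MeasurableEquiv.toLp 2 (Fin (m+2) → ℝ)).symm) (b.repr v) i = b.repr v i :=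
      fun i => rfl
    simp only [happ]
    rw [hnorm (b.repr v), b.repr.norm_map, OrthonormalBasis.repr_apply_apply,
      OrthonormalBasis.repr_apply_apply, hb0, hb1]
  -- step 2 -> 3
  have e2 : T2 = ⇑(MeasurableEquiv.piFinSuccAbove (fun _ : Fin (m+2) => ℝ) 0) ⁻¹' T3 := by
    ext f
    have hef : (MeasurableEquiv.piFinSuccAbove (fun _ : Fin (m+2) => ℝ) 0) f
        = (f 0, fun j : Fin (m+1) => f j.succ) := by
      show (f 0, Fin.removeNth 0 f) = _
      rw [Fin.removeNth_zero]
      rfl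
    simp only [mem_preimage, hef, hT2def, hT3def, mem_setOf_eq,
      Fin.sum_univ_succ (f := fun i => f i ^ 2), Fin.succ_zero_eq_one]
  -- step 3 -> 4
  have e3 : T3 = (Prod.map (id : ℝ → ℝ)
      ⇑(MeasurableEquiv.piFinSuccAbove (fun _ : Fin (m+1) => ℝ) 0)) ⁻¹' T4 := by
    ext q
    obtain ⟨a, g⟩ := q
    have hef : (MeasurableEquiv.piFinSuccAbove (fun _ : Fin (m+1) => ℝ) 0) g
        = (g 0, fun j : Fin m => g j.succ) := by
      show (g 0, Fin.removeNth 0 g) = _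
      rw [Fin.removeNth_zero]
      rfl
    simp only [mem_preimage, Prod.map, id, hef, hT3def, hT4def, mem_setOf_eq,
      Fin.sum_univ_succ (f := fun i => g i ^ 2)]
  -- step 4 -> 5
  have e4 : ⇑MeasurableEquiv.prodAssoc ⁻¹' T4 = T5 := by
    ext ⟨⟨a, bb⟩, z⟩
    simp only [mem_preimage, MeasurableEquiv.prodAssoc, Equiv.prodAssoc, hT4def, hT5def,
      MeasurableEquiv.coe_mk, Equiv.coe_fn_mk, mem_setOf_eq]
  -- measure chain
  have m0 : volume {v : EuclideanSpace ℝ (Fin (m+2)) |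
        ‖v‖ < 1 ∧ ((inner ℝ u v : ℝ), (inner ℝ w v : ℝ)) ∈ W} = volume T2 := by
    rw [e0]
    rw [b.measurePreserving_repr.measure_preimage
      ((((MeasurableEquiv.toLp 2 (Fin (m+2) → ℝ)).symm).measurable hT2)).nullMeasurableSet]
    exact (EuclideanSpace.volume_preserving_symm_measurableEquiv_toLp
      (Fin (m+2))).measure_preimage hT2.nullMeasurableSet
  have m2 : volume T2 = volume T3 := by
    rw [e2]
    exact (volume_preserving_piFinSuccAbove (fun _ : Fin (m+2) => ℝ) 0).measure_preimage
      hT3.nullMeasurableSet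
  have m3 : volume T3 = volume T4 := by
    rw [e3]
    exact ((MeasurePreserving.id volume).prod
      (volume_preserving_piFinSuccAbove (fun _ : Fin (m+1) => ℝ) 0)).measure_preimage
      hT4.nullMeasurableSet
  have m4 : volume T4 = volume T5 := by
    rw [← e4]
    exact ((measurePreserving_prodAssoc volume volume volume).measure_preimage
      hT4.nullMeasurableSet).symm
  rw [m0, m2, m3, m4]
  -- Fubini
  rw [Measure.volume_eq_prod, Measure.prod_apply hT5, ← lintegral_indicator hW]
  refine lintegral_congr fun ab => ?_
  by_cases hab : ab ∈ W
  · rw [Set.indicator_of_mem hab]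
    unfold Gm
    congr 1
    ext z
    simp only [mem_preimage, hT5def, mem_setOf_eq, hab, and_true]
    constructor <;> intro h <;> linarith
  · rw [Set.indicator_of_notMem hab]
    have : Prod.mk ab ⁻¹' T5 = ∅ := by
      ext z
      simp [hT5def, hab]
    rw [this, measure_empty]

lemma core {m : ℕ} (u w : EuclideanSpace ℝ (Fin (m+2))) (hu : ‖u‖ = 1) (hw : ‖w‖ = 1)
    (huw : (inner ℝ u w : ℝ) = 0) {θ : ℝ} (hθ1 : 0 < θ) (hθ2 : θ < π) :
    volume (ball (0 : EuclideanSpace ℝ (Fin (m+2))) 1 ∩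
        {v | (inner ℝ u v : ℝ) * (Real.cos θ * (inner ℝ u v : ℝ)
          + Real.sin θ * (inner ℝ w v : ℝ)) < 0})
      = ENNReal.ofReal (θ / π) * volume (ball (0 : EuclideanSpace ℝ (Fin (m+2))) 1) := by
  have hWm : Measurable fun ab : ℝ × ℝ =>
      ab.1 * (Real.cos θ * ab.1 + Real.sin θ * ab.2) := by fun_prop
  have hW : MeasurableSet {ab : ℝ × ℝ | ab.1 * (Real.cos θ * ab.1 + Real.sin θ * ab.2) < 0} :=
    measurableSet_lt hWm measurable_const
  have h1 : ball (0 : EuclideanSpace ℝ (Fin (m+2))) 1 ∩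
      {v | (inner ℝ u v : ℝ) * (Real.cos θ * (inner ℝ u v : ℝ)
        + Real.sin θ * (inner ℝ w v : ℝ)) < 0}
      = {v : EuclideanSpace ℝ (Fin (m+2)) | ‖v‖ < 1 ∧ ((inner ℝ u v : ℝ), (inner ℝ w v : ℝ)) ∈
          {ab : ℝ × ℝ | ab.1 * (Real.cos θ * ab.1 + Real.sin θ * ab.2) < 0}} := by
    ext v
    simp only [mem_inter_iff, mem_ball_zero_iff, mem_setOf_eq]
  have h2 : volume (ball (0 : EuclideanSpace ℝ (Fin (m+2))) 1)
      = (∫⁻ r in Ioi (0:ℝ), ENNReal.ofReal r * Gm m (1 - r ^ 2)) * ENNReal.ofReal (2 * π) := by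
    have hset : ball (0 : EuclideanSpace ℝ (Fin (m+2))) 1
        = {v : EuclideanSpace ℝ (Fin (m+2)) | ‖v‖ < 1 ∧
            ((inner ℝ u v : ℝ), (inner ℝ w v : ℝ)) ∈ (univ : Set (ℝ × ℝ))} := by
      ext v
      simp [mem_ball_zero_iff]
    rw [hset, transfer u w hu hw huw _ MeasurableSet.univ, Measure.restrict_univ,
      lintegral_disk m]
  rw [h1, transfer u w hu hw huw _ hW, lintegral_wedge m hθ1 hθ2, h2]
  have key : ENNReal.ofReal (θ / π) * ENNReal.ofReal (2 * π) = ENNReal.ofReal (2 * θ) := by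
    rw [← ENNReal.ofReal_mul (div_nonneg hθ1.le Real.pi_pos.le)]
    congr 1
    field_simp
  rw [← key]
  ring

lemma hyperplane_null {d : ℕ} (x : EuclideanSpace ℝ (Fin d)) (hx : x ≠ 0) :
    volume {v : EuclideanSpace ℝ (Fin d) | (inner ℝ x v : ℝ) = 0} = 0 := by
  have hset : {v : EuclideanSpace ℝ (Fin d) | (inner ℝ x v : ℝ) = 0}
      = (LinearMap.ker (innerSL ℝ x).toLinearMap : Set (EuclideanSpace ℝ (Fin d))) := by
    ext v
    simp [LinearMap.mem_ker]
  rw [hset]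
  refine Measure.addHaar_submodule volume _ (fun h => ?_)
  have hxmem : x ∈ LinearMap.ker (innerSL ℝ x).toLinearMap := by rw [h]; trivial
  have hzero : (inner ℝ x x : ℝ) = 0 := by simpa using LinearMap.mem_ker.1 hxmem
  exact hx (inner_self_eq_zero.1 hzero)

lemma volume_ball_inter {d : ℕ} (x y : EuclideanSpace ℝ (Fin d)) (hx : x ≠ 0) (hy : y ≠ 0) :
    volume (ball (0 : EuclideanSpace ℝ (Fin d)) 1 ∩
        {v | (inner ℝ x v : ℝ) * (inner ℝ y v : ℝ) < 0})
      = ENNReal.ofReal (Real.arccos ((inner ℝ x y : ℝ) / (‖x‖ * ‖y‖)) / π)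
          * volume (ball (0 : EuclideanSpace ℝ (Fin d)) 1) := by
  have hnx : (0:ℝ) < ‖x‖ := norm_pos_iff.2 hx
  have hny : (0:ℝ) < ‖y‖ := norm_pos_iff.2 hy
  by_cases hdep : ∃ a : ℝ, a • x = y
  · obtain ⟨c, rfl⟩ := hdep
    have hc : c ≠ 0 := fun h => hy (by simp [h])
    have hratio : (inner ℝ x (c • x) : ℝ) / (‖x‖ * ‖c • x‖) = c / |c| := by
      rw [real_inner_smul_right, real_inner_self_eq_norm_sq, norm_smul, Real.norm_eq_abs]
      rw [show ‖x‖ * (|c| * ‖x‖) = |c| * ‖x‖ ^ 2 by ring]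
      rw [mul_div_mul_right _ _ (by positivity)]
    rcases hc.lt_or_gt with hcneg | hcpos
    · have habs : c / |c| = -1 := by rw [abs_of_neg hcneg]; field_simp
      have hsets : {v : EuclideanSpace ℝ (Fin d) |
          (inner ℝ x v : ℝ) * (inner ℝ (c • x) v : ℝ) < 0}
          = {v | (inner ℝ x v : ℝ) ≠ 0} := by
        ext v
        simp only [mem_setOf_eq, real_inner_smul_left]
        constructor
        · intro h h0
          rw [h0] at h
          simp at h
        · intro h
          have h2 : (0:ℝ) < (inner ℝ x v : ℝ) ^ 2 := by positivity
          nlinarith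
      rw [hratio, habs, Real.arccos_neg_one, div_self Real.pi_ne_zero, ENNReal.ofReal_one,
        one_mul, hsets]
      refine measure_congr (Filter.eventuallyEq_set.2 ?_)
      have hae : ∀ᵐ v : EuclideanSpace ℝ (Fin d), (inner ℝ x v : ℝ) ≠ 0 := by
        refine ae_iff.2 ?_
        simpa [not_not] using hyperplane_null x hx
      filter_upwards [hae] with v hv
      exact and_iff_left hv
    · have habs : c / |c| = 1 := by rw [abs_of_pos hcpos]; field_simp
      have hsets : ball (0 : EuclideanSpace ℝ (Fin d)) 1 ∩ {v : EuclideanSpace ℝ (Fin d) |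
          (inner ℝ x v : ℝ) * (inner ℝ (c • x) v : ℝ) < 0} = ∅ := by
        refine Set.eq_empty_of_forall_notMem fun v hv => ?_
        have h := hv.2
        simp only [mem_setOf_eq, real_inner_smul_left] at h
        nlinarith [sq_nonneg (inner ℝ x v : ℝ)]
      rw [hratio, habs, Real.arccos_one, zero_div, ENNReal.ofReal_zero, zero_mul, hsets,
        measure_empty]
  · push_neg at hdep
    have hli : LinearIndependent ℝ ![y, x] := by
      rw [linearIndependent_fin2]
      refine ⟨by simpa using hx, fun a => by simpa using hdep a⟩
    have h2d : 2 ≤ d := by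
      have := hli.fintype_card_le_finrank
      simpa [finrank_euclideanSpace_fin] using this
    obtain ⟨m, rfl⟩ : ∃ m, d = m + 2 := ⟨d - 2, by omega⟩
    set r : ℝ := (inner ℝ x y : ℝ) / (‖x‖ * ‖y‖) with hr
    have hrlt : |r| < 1 := by
      refine lt_of_le_of_ne (abs_real_inner_div_norm_mul_norm_le_one x y) fun habs => ?_
      obtain ⟨-, a, -, hay⟩ := (abs_real_inner_div_norm_mul_norm_eq_one_iff x y).1 habs
      exact hdep a hay.symm
    have habs := abs_lt.1 hrlt
    set θ := Real.arccos r with hθdef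
    have hθ1 : 0 < θ := Real.arccos_pos.2 habs.2
    have hθ2 : θ < π := by
      refine lt_of_le_of_ne (Real.arccos_le_pi r) fun h => ?_
      have := Real.arccos_eq_pi.1 h
      linarith
    have hcos : Real.cos θ = r := Real.cos_arccos (by linarith) (by linarith)
    have hsin : 0 < Real.sin θ := Real.sin_pos_of_pos_of_lt_pi hθ1 hθ2
    obtain ⟨u, hu'⟩ : ∃ u' : EuclideanSpace ℝ (Fin (m+2)), u' = ‖x‖⁻¹ • x := ⟨_, rfl⟩
    have hun : ‖u‖ = 1 := by
      rw [hu', norm_smul]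
      simp [abs_of_pos (inv_pos.2 hnx), inv_mul_cancel₀ hnx.ne']
    have hyu : (inner ℝ u (‖y‖⁻¹ • y) : ℝ) = r := by
      rw [hu', real_inner_smul_left, real_inner_smul_right, hr]
      field_simp
    obtain ⟨w, hwdef⟩ : ∃ w' : EuclideanSpace ℝ (Fin (m+2)),
      w' = (Real.sin θ)⁻¹ • (‖y‖⁻¹ • y - Real.cos θ • u) := ⟨_, rfl⟩
    have huu : (inner ℝ u u : ℝ) = 1 := by
      rw [real_inner_self_eq_norm_sq, hun]; norm_num
    have hwu : (inner ℝ u w : ℝ) = 0 := by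
      rw [hwdef, real_inner_smul_right, inner_sub_right, hyu, real_inner_smul_right, huu, hcos]
      ring
    have hz2 : ‖‖y‖⁻¹ • y - Real.cos θ • u‖ ^ 2 = 1 - r ^ 2 := by
      rw [norm_sub_sq_real, real_inner_smul_right]
      have h1 : ‖‖y‖⁻¹ • y‖ = 1 := by
        rw [norm_smul]
        simp [abs_of_pos (inv_pos.2 hny), inv_mul_cancel₀ hny.ne']
      have h2 : (inner ℝ (‖y‖⁻¹ • y) u : ℝ) = r := by rw [real_inner_comm]; exact hyu
      rw [h1, h2, norm_smul, hun, hcos, Real.norm_eq_abs]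
      linear_combination sq_abs r
    have hznorm : ‖‖y‖⁻¹ • y - Real.cos θ • u‖ = Real.sin θ := by
      have hs2 : Real.sin θ ^ 2 = 1 - r ^ 2 := by rw [Real.sin_sq, hcos]
      nlinarith [norm_nonneg (‖y‖⁻¹ • y - Real.cos θ • u)]
    have hwnorm : ‖w‖ = 1 := by
      rw [hwdef, norm_smul, hznorm, Real.norm_eq_abs, abs_of_pos (inv_pos.2 hsin),
        inv_mul_cancel₀ hsin.ne']
    have hxu : x = ‖x‖ • u := by rw [hu', smul_inv_smul₀ hnx.ne']
    have hsw : Real.sin θ • w = ‖y‖⁻¹ • y - Real.cos θ • u := by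
      rw [hwdef, smul_inv_smul₀ hsin.ne']
    have hy' : y = ‖y‖ • (Real.cos θ • u + Real.sin θ • w) := by
      rw [hsw, show Real.cos θ • u + (‖y‖⁻¹ • y - Real.cos θ • u) = ‖y‖⁻¹ • y from by abel,
        smul_inv_smul₀ hny.ne']
    have hset : {v : EuclideanSpace ℝ (Fin (m+2)) | (inner ℝ x v : ℝ) * (inner ℝ y v : ℝ) < 0}
        = {v | (inner ℝ u v : ℝ) * (Real.cos θ * (inner ℝ u v : ℝ)
            + Real.sin θ * (inner ℝ w v : ℝ)) < 0} := by
      ext v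
      simp only [mem_setOf_eq]
      have h1 : (inner ℝ x v : ℝ) = ‖x‖ * (inner ℝ u v : ℝ) := by
        conv_lhs => rw [hxu]
        rw [real_inner_smul_left]
      have h2 : (inner ℝ y v : ℝ)
          = ‖y‖ * (Real.cos θ * (inner ℝ u v : ℝ) + Real.sin θ * (inner ℝ w v : ℝ)) := by
        conv_lhs => rw [hy']
        rw [real_inner_smul_left, inner_add_left, real_inner_smul_left, real_inner_smul_left]
      rw [h1, h2, show ‖x‖ * (inner ℝ u v : ℝ) * (‖y‖ * (Real.cos θ * (inner ℝ u v : ℝ)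
            + Real.sin θ * (inner ℝ w v : ℝ)))
          = (‖x‖ * ‖y‖) * ((inner ℝ u v : ℝ) * (Real.cos θ * (inner ℝ u v : ℝ)
            + Real.sin θ * (inner ℝ w v : ℝ))) from by ring]
      exact mul_lt_zero_iff_of_pos (mul_pos hnx hny)
    rw [hset]
    exact core u w hun hwnorm hwu hθ1 hθ2

lemma measurable_sign : Measurable Real.sign := by
  show Measurable fun r : ℝ => if r < 0 then (-1:ℝ) else if 0 < r then 1 else 0
  exact Measurable.ite (measurableSet_lt measurable_id measurable_const) measurable_const
    (Measurable.ite (measurableSet_lt measurable_const measurable_id) measurable_const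
      measurable_const)

end RandomHyperplane

open RandomHyperplane MeasureTheory Metric

/-- If a random unit vector `h` is chosen uniformly from the unit sphere in `ℝ^d`
and `x, y` are two distinct nonzero points, then the probability that the hyperplane
through the origin with normal `h` separates `x` and `y`
(i.e. `sign ⟨x,h⟩ ≠ sign ⟨y,h⟩`) equals `θ/π`, where
`θ = arccos (⟨x,y⟩ / (‖x‖‖y‖))` is the angle between `x` and `y`. -/
theorem random_hyperplane_separation {d : ℕ}
    (x y : EuclideanSpace ℝ (Fin d)) (hx : x ≠ 0) (hy : y ≠ 0) (hxy : x ≠ y)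
    (μ : Measure (sphere (0 : EuclideanSpace ℝ (Fin d)) 1))
    (hμ : μ = ((volume : Measure (EuclideanSpace ℝ (Fin d))).toSphere Set.univ)⁻¹ •
        (volume : Measure (EuclideanSpace ℝ (Fin d))).toSphere) :
    μ {h : sphere (0 : EuclideanSpace ℝ (Fin d)) 1 |
        Real.sign (inner ℝ x (h : EuclideanSpace ℝ (Fin d)) : ℝ) ≠
        Real.sign (inner ℝ y (h : EuclideanSpace ℝ (Fin d)) : ℝ)} =
      ENNReal.ofReal (Real.arccos ((inner ℝ x y : ℝ) / (‖x‖ * ‖y‖)) / Real.pi) := by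
  have hd : 0 < d := by
    have : Nontrivial (EuclideanSpace ℝ (Fin d)) := ⟨⟨x, 0, hx⟩⟩
    have h2 := Module.finrank_pos (R := ℝ) (M := EuclideanSpace ℝ (Fin d))
    rwa [finrank_euclideanSpace_fin] at h2
  have hfx : Measurable fun h : sphere (0 : EuclideanSpace ℝ (Fin d)) 1 =>
      (inner ℝ x (h : EuclideanSpace ℝ (Fin d)) : ℝ) :=
    ((innerSL ℝ x).continuous.comp continuous_subtype_val).measurable
  have hfy : Measurable fun h : sphere (0 : EuclideanSpace ℝ (Fin d)) 1 =>
      (inner ℝ y (h : EuclideanSpace ℝ (Fin d)) : ℝ) :=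
    ((innerSL ℝ y).continuous.comp continuous_subtype_val).measurable
  have hS : MeasurableSet {h : sphere (0 : EuclideanSpace ℝ (Fin d)) 1 |
      Real.sign (inner ℝ x (h : EuclideanSpace ℝ (Fin d)) : ℝ) ≠
      Real.sign (inner ℝ y (h : EuclideanSpace ℝ (Fin d)) : ℝ)} :=
    (measurableSet_eq_fun (measurable_sign.comp hfx) (measurable_sign.comp hfy)).compl
  have hcone : Ioo (0:ℝ) 1 • (Subtype.val '' {h : sphere (0 : EuclideanSpace ℝ (Fin d)) 1 |
        Real.sign (inner ℝ x (h : EuclideanSpace ℝ (Fin d)) : ℝ) ≠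
        Real.sign (inner ℝ y (h : EuclideanSpace ℝ (Fin d)) : ℝ)})
      = ball (0 : EuclideanSpace ℝ (Fin d)) 1 ∩
        {v | Real.sign (inner ℝ x v : ℝ) ≠ Real.sign (inner ℝ y v : ℝ)} := by
    ext v
    constructor
    · intro hv
      rw [Set.mem_smul] at hv
      obtain ⟨c, hc, z, hz, rfl⟩ := hv
      obtain ⟨h, hhS, rfl⟩ := hz
      have hnh : ‖(h : EuclideanSpace ℝ (Fin d))‖ = 1 := mem_sphere_zero_iff_norm.1 h.2
      constructor
      · rw [mem_ball_zero_iff, norm_smul, Real.norm_eq_abs, abs_of_pos hc.1, hnh, mul_one]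
        exact hc.2
      · simp only [mem_setOf_eq]
        rw [real_inner_smul_right, real_inner_smul_right, sign_mul_pos hc.1, sign_mul_pos hc.1]
        exact hhS
    · rintro ⟨hb, hsgn⟩
      simp only [mem_setOf_eq] at hsgn
      have hv0 : v ≠ 0 := by
        rintro rfl
        simp [inner_zero_right] at hsgn
      have hnv : (0:ℝ) < ‖v‖ := norm_pos_iff.2 hv0
      rw [Set.mem_smul]
      refine ⟨‖v‖, ⟨hnv, mem_ball_zero_iff.1 hb⟩, ‖v‖⁻¹ • v, ?_, smul_inv_smul₀ hnv.ne' v⟩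
      have hsph : ‖v‖⁻¹ • v ∈ sphere (0 : EuclideanSpace ℝ (Fin d)) 1 := by
        rw [mem_sphere_zero_iff_norm, norm_smul, Real.norm_eq_abs, abs_of_pos (inv_pos.2 hnv),
          inv_mul_cancel₀ hnv.ne']
      refine ⟨⟨‖v‖⁻¹ • v, hsph⟩, ?_, rfl⟩
      simp only [mem_setOf_eq]
      show Real.sign (inner ℝ x (‖v‖⁻¹ • v) : ℝ) ≠ Real.sign (inner ℝ y (‖v‖⁻¹ • v) : ℝ)
      rw [real_inner_smul_right, real_inner_smul_right, sign_mul_pos (inv_pos.2 hnv),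
        sign_mul_pos (inv_pos.2 hnv)]
      exact hsgn
  have haeq : ((ball (0 : EuclideanSpace ℝ (Fin d)) 1 ∩
        {v | Real.sign (inner ℝ x v : ℝ) ≠ Real.sign (inner ℝ y v : ℝ)} :
          Set (EuclideanSpace ℝ (Fin d))))
      =ᵐ[volume] ((ball (0 : EuclideanSpace ℝ (Fin d)) 1 ∩
        {v | (inner ℝ x v : ℝ) * (inner ℝ y v : ℝ) < 0} : Set (EuclideanSpace ℝ (Fin d)))) := by
    refine Filter.eventuallyEq_set.2 ?_
    have haex : ∀ᵐ v : EuclideanSpace ℝ (Fin d), (inner ℝ x v : ℝ) ≠ 0 :=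
      ae_iff.2 (by simpa [not_not] using hyperplane_null x hx)
    have haey : ∀ᵐ v : EuclideanSpace ℝ (Fin d), (inner ℝ y v : ℝ) ≠ 0 :=
      ae_iff.2 (by simpa [not_not] using hyperplane_null y hy)
    filter_upwards [haex, haey] with v hvx hvy
    simp only [mem_inter_iff, mem_setOf_eq]
    exact and_congr_right fun _ => sign_ne_iff hvx hvy
  rw [hμ, Measure.smul_apply, smul_eq_mul, Measure.toSphere_apply' _ hS,
    Measure.toSphere_apply_univ, finrank_euclideanSpace_fin, hcone, measure_congr haeq,
    volume_ball_inter x y hx hy]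
  have hV0 : volume (ball (0 : EuclideanSpace ℝ (Fin d)) 1) ≠ 0 :=
    (measure_ball_pos volume 0 one_pos).ne'
  have hVt : volume (ball (0 : EuclideanSpace ℝ (Fin d)) 1) ≠ ⊤ := measure_ball_lt_top.ne
  have hd0 : (d : ℝ≥0∞) ≠ 0 := Nat.cast_ne_zero.2 hd.ne'
  have hdt : (d : ℝ≥0∞) ≠ ⊤ := ENNReal.natCast_ne_top d
  calc ((d : ℝ≥0∞) * volume (ball (0 : EuclideanSpace ℝ (Fin d)) 1))⁻¹ *
        ((d : ℝ≥0∞) * (ENNReal.ofReal (Real.arccos ((inner ℝ x y : ℝ) / (‖x‖ * ‖y‖)) / π) *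
          volume (ball (0 : EuclideanSpace ℝ (Fin d)) 1)))
      = ((d : ℝ≥0∞)⁻¹ * (d : ℝ≥0∞)) *
        (((volume (ball (0 : EuclideanSpace ℝ (Fin d)) 1))⁻¹ *
          volume (ball (0 : EuclideanSpace ℝ (Fin d)) 1)) *
          ENNReal.ofReal (Real.arccos ((inner ℝ x y : ℝ) / (‖x‖ * ‖y‖)) / π)) := by
        rw [ENNReal.mul_inv (Or.inl hd0) (Or.inl hdt)]
        ring
    _ = ENNReal.ofReal (Real.arccos ((inner ℝ x y : ℝ) / (‖x‖ * ‖y‖)) / π) := by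
        rw [ENNReal.inv_mul_cancel hd0 hdt, ENNReal.inv_mul_cancel hV0 hVt, one_mul, one_mul]
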